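/- arXiv:2004.09860 — 2 statements merged into one kernel-verified Lean document; each statement's English description precedes it below -/
import Mathlib

section
/- Let X ⊂ ℝ^d be bounded and δ > 0, and let (A_m)_{m∈M} be a finite covering of X by pairwise disjoint cubes of side length δ. Define R^δ v on X by setting, on each A_m ∩ X, the value δ^{-d} ∫_{A_m} v(x) dx, for v ∈ L²(ℝ^d). Then ‖R^δ v − v‖_{L²(X)} ≤ 2^{d/2} · sup_{|z|_∞ ≤ δ} ‖v(·+z) − v‖_{L²(X)} (functions extended by 0 outside of relevant domains where needed). -/
open MeasureTheory ENNReal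

private theorem aux_rpow2 (x : ℝ≥0∞) : x ^ (2:ℝ) = x ^ 2 := by
  rw [show (2:ℝ) = ((2:ℕ):ℝ) by norm_num, ENNReal.rpow_natCast]

private theorem aux_half' (x : ℝ≥0∞) : (x ^ 2) ^ (1/(2:ℝ)) = x := by
  rw [← ENNReal.rpow_natCast x 2, ← ENNReal.rpow_mul]
  norm_num

private theorem aux_cs {α : Type*} [MeasurableSpace α] (μ : Measure α) {h : α → ℝ≥0∞}
    (hh : Measurable h) :
    (∫⁻ a, h a ∂μ) ^ 2 ≤ μ Set.univ * ∫⁻ a, h a ^ 2 ∂μ := by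
  have hpq : Real.HolderConjugate 2 2 := Real.holderConjugate_iff.mpr ⟨by norm_num, by norm_num⟩
  have H := ENNReal.lintegral_mul_le_Lp_mul_Lq μ hpq hh.aemeasurable
    (measurable_const (a := (1:ℝ≥0∞))).aemeasurable
  simp only [Pi.mul_apply, mul_one, ENNReal.one_rpow, lintegral_const, one_mul] at H
  simp only [aux_rpow2] at H
  calc (∫⁻ a, h a ∂μ) ^ 2 ≤ ((∫⁻ a, h a ^ 2 ∂μ) ^ (1/(2:ℝ)) * μ Set.univ ^ (1/(2:ℝ))) ^ 2 :=
        pow_le_pow_left' H 2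
    _ = μ Set.univ * ∫⁻ a, h a ^ 2 ∂μ := by
        rw [mul_pow, ← ENNReal.rpow_natCast ((∫⁻ a, h a ^ 2 ∂μ) ^ (1/(2:ℝ))) 2,
          ← ENNReal.rpow_natCast (μ Set.univ ^ (1/(2:ℝ))) 2,
          ← ENNReal.rpow_mul, ← ENNReal.rpow_mul]
        norm_num [mul_comm]

private theorem aux_ptwise {d : ℕ} {δ : ℝ} (hδ : 0 < δ) {g : (Fin d → ℝ) → ℝ}
    (hg : Measurable g) (hg2 : MemLp g 2 volume)
    {a x : Fin d → ℝ} (hx : x ∈ Set.univ.pi fun i => Set.Ico (a i) (a i + δ)) :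
    (‖(δ ^ d)⁻¹ * (∫ y in Set.univ.pi fun i => Set.Ico (a i) (a i + δ), g y) - g x‖₊ : ℝ≥0∞) ^ 2
      ≤ (ENNReal.ofReal (δ ^ d))⁻¹ *
        ∫⁻ z in {z : Fin d → ℝ | ‖z‖ ≤ δ}, (‖g (x + z) - g x‖₊ : ℝ≥0∞) ^ 2 := by
  set Am : Set (Fin d → ℝ) := Set.univ.pi fun i => Set.Ico (a i) (a i + δ) with hAm
  have hAmeas : MeasurableSet Am := MeasurableSet.univ_pi fun i => measurableSet_Ico
  have hδd : (0:ℝ) < δ ^ d := pow_pos hδ d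
  have hvol : volume Am = ENNReal.ofReal (δ ^ d) := by
    rw [hAm, volume_pi_pi]
    simp only [Real.volume_Ico, add_sub_cancel_left, Finset.prod_const, Finset.card_univ,
      Fintype.card_fin]
    rw [← ENNReal.ofReal_pow hδ.le]
  set c : ℝ≥0∞ := ENNReal.ofReal (δ ^ d) with hc
  have hc0 : c ≠ 0 := by simp [hc, hδd]
  have hctop : c ≠ ∞ := ENNReal.ofReal_ne_top
  haveI : IsFiniteMeasure (volume.restrict Am) := by
    constructor
    rw [Measure.restrict_apply_univ, hvol]
    exact ENNReal.ofReal_lt_top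
  have hint : IntegrableOn g Am volume :=
    (hg2.restrict Am).integrable (by norm_num)
  have hsub : (δ ^ d)⁻¹ * (∫ y in Am, g y) - g x
      = (δ ^ d)⁻¹ * ∫ y in Am, (g y - g x) := by
    rw [integral_sub hint (integrable_const _), integral_const, measureReal_restrict_apply_univ, measureReal_def,
      hvol, ENNReal.toReal_ofReal hδd.le, smul_eq_mul]
    field_simp
  rw [hsub]
  have hnn : (‖(δ ^ d)⁻¹ * ∫ y in Am, (g y - g x)‖₊ : ℝ≥0∞)
      ≤ c⁻¹ * ∫⁻ y in Am, (‖g y - g x‖₊ : ℝ≥0∞) := by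
    rw [nnnorm_mul, ENNReal.coe_mul, ← enorm_eq_nnnorm,
      Real.enorm_eq_ofReal (inv_nonneg.2 hδd.le), ENNReal.ofReal_inv_of_pos hδd, ← hc]
    exact mul_le_mul_right (enorm_integral_le_lintegral_enorm _) _
  have hCS : (∫⁻ y in Am, (‖g y - g x‖₊ : ℝ≥0∞)) ^ 2
      ≤ c * ∫⁻ y in Am, (‖g y - g x‖₊ : ℝ≥0∞) ^ 2 := by
    have := aux_cs (volume.restrict Am)
      (h := fun y => (‖g y - g x‖₊ : ℝ≥0∞))
      ((hg.sub measurable_const).nnnorm.coe_nnreal_ennreal)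
    rwa [Measure.restrict_apply_univ, hvol] at this
  calc (‖(δ ^ d)⁻¹ * ∫ y in Am, (g y - g x)‖₊ : ℝ≥0∞) ^ 2
      ≤ (c⁻¹ * ∫⁻ y in Am, (‖g y - g x‖₊ : ℝ≥0∞)) ^ 2 := pow_le_pow_left' hnn 2
    _ = c⁻¹ ^ 2 * (∫⁻ y in Am, (‖g y - g x‖₊ : ℝ≥0∞)) ^ 2 := mul_pow _ _ _
    _ ≤ c⁻¹ ^ 2 * (c * ∫⁻ y in Am, (‖g y - g x‖₊ : ℝ≥0∞) ^ 2) := mul_le_mul_right hCS _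
    _ = c⁻¹ * ∫⁻ y in Am, (‖g y - g x‖₊ : ℝ≥0∞) ^ 2 := by
        rw [pow_two, mul_assoc, ← mul_assoc c⁻¹ c, ENNReal.inv_mul_cancel hc0 hctop, one_mul]
    _ ≤ c⁻¹ * ∫⁻ z in {z : Fin d → ℝ | ‖z‖ ≤ δ}, (‖g (x + z) - g x‖₊ : ℝ≥0∞) ^ 2 := by
        refine mul_le_mul_right ?_ _
        have hCmeas : MeasurableSet {z : Fin d → ℝ | ‖z‖ ≤ δ} := by
          have : {z : Fin d → ℝ | ‖z‖ ≤ δ} = Metric.closedBall 0 δ := by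
            ext z; simp [Metric.mem_closedBall, dist_zero_right]
          rw [this]; exact measurableSet_closedBall
        rw [← lintegral_indicator hAmeas, ← lintegral_indicator hCmeas,
          ← lintegral_add_left_eq_self
            (Am.indicator fun y => (‖g y - g x‖₊ : ℝ≥0∞) ^ 2) x]
        refine lintegral_mono fun z => ?_
        by_cases hz : x + z ∈ Am
        · have hzC : z ∈ {z : Fin d → ℝ | ‖z‖ ≤ δ} := by
            simp only [Set.mem_setOf_eq, pi_norm_le_iff_of_nonneg hδ.le]
            intro i
            have h1 := hx i (Set.mem_univ i)
            have h2 := hz i (Set.mem_univ i)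
            simp only [Set.mem_Ico, Pi.add_apply] at h1 h2
            rw [Real.norm_eq_abs, abs_le]
            constructor <;> linarith [h1.1, h1.2, h2.1, h2.2]
          rw [Set.indicator_of_mem hz, Set.indicator_of_mem hzC]
        · rw [Set.indicator_of_notMem hz]
          exact zero_le

theorem stmt_5 {d : ℕ} (X : Set (Fin d → ℝ)) (hX : Bornology.IsBounded X)
    (δ : ℝ) (hδ : 0 < δ) {ι : Type} (M : Finset ι) (A : ι → Set (Fin d → ℝ))
    (hcube : ∀ m ∈ M, ∃ a : Fin d → ℝ,
      A m = Set.univ.pi fun i => Set.Ico (a i) (a i + δ))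
    (hdisj : ∀ m ∈ M, ∀ m' ∈ M, m ≠ m' → Disjoint (A m) (A m'))
    (hcover : X ⊆ ⋃ m ∈ M, A m)
    (v : (Fin d → ℝ) → ℝ) (hv : MemLp v 2 volume)
    (Rv : (Fin d → ℝ) → ℝ)
    (hRv : ∀ m ∈ M, ∀ x ∈ A m ∩ X, Rv x = (δ ^ d)⁻¹ * ∫ y in A m, v y) :
    eLpNorm (fun x => Rv x - v x) 2 (volume.restrict X)
      ≤ (2 : ℝ≥0∞) ^ ((d : ℝ) / 2) *
        ⨆ z ∈ {z : Fin d → ℝ | ‖z‖ ≤ δ},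
          eLpNorm (fun x => v (x + z) - v x) 2 (volume.restrict X) := by
  classical
  set C : Set (Fin d → ℝ) := {z : Fin d → ℝ | ‖z‖ ≤ δ} with hCdef
  set g : (Fin d → ℝ) → ℝ := hv.1.mk v with hgdef
  have hgm : Measurable g := hv.1.stronglyMeasurable_mk.measurable
  have hvg : v =ᵐ[volume] g := hv.1.ae_eq_mk
  have hg2 : MemLp g 2 volume := hv.ae_eq hvg
  set S : ℝ≥0∞ := ⨆ z ∈ C, eLpNorm (fun x => v (x + z) - v x) 2 (volume.restrict X) with hSdef
  set c : ℝ≥0∞ := ENNReal.ofReal (δ ^ d) with hcdef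
  have hc0 : c ≠ 0 := by simp [hcdef, pow_pos hδ]
  -- translate eLpNorms to lintegrals of squares
  have help : ∀ (μ : Measure (Fin d → ℝ)) (f : (Fin d → ℝ) → ℝ),
      eLpNorm f 2 μ = (∫⁻ x, (‖f x‖₊ : ℝ≥0∞) ^ 2 ∂μ) ^ (1/(2:ℝ)) := by
    intro μ f
    rw [eLpNorm_eq_lintegral_rpow_enorm_toReal (by norm_num) (by norm_num)]
    simp only [ENNReal.toReal_ofNat, aux_rpow2, enorm_eq_nnnorm]
  -- LHS with g
  have hLHSg : eLpNorm (fun x => Rv x - v x) 2 (volume.restrict X)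
      = (∫⁻ x in X, (‖Rv x - g x‖₊ : ℝ≥0∞) ^ 2) ^ (1/(2:ℝ)) := by
    rw [eLpNorm_congr_ae (f := fun x => Rv x - v x) (g := fun x => Rv x - g x)
      (ae_restrict_of_ae (hvg.mono fun x hx => by simp [hx])), help]
  rw [hLHSg]
  -- the translated function with g, per z
  have htrans : ∀ z : Fin d → ℝ,
      (fun x => v (x + z) - v x) =ᵐ[volume] fun x => g (x + z) - g x := by
    intro z
    have h1 : (fun x => v (x + z)) =ᵐ[volume] fun x => g (x + z) :=
      (measurePreserving_add_right volume z).quasiMeasurePreserving.ae_eq_comp hvg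
    exact h1.sub hvg
  -- the main integral estimate
  have hGmeas_pair : Measurable (Function.uncurry fun x z : Fin d → ℝ =>
      (‖g (x + z) - g x‖₊ : ℝ≥0∞) ^ 2) := by
    apply Measurable.pow_const
    exact ((hgm.comp (measurable_fst.add measurable_snd)).sub
      (hgm.comp measurable_fst)).nnnorm.coe_nnreal_ennreal
  have hGinner : Measurable fun x => ∫⁻ z in C, (‖g (x + z) - g x‖₊ : ℝ≥0∞) ^ 2 :=
    Measurable.lintegral_prod_right hGmeas_pair
  have key : ∀ x ∈ X, (‖Rv x - g x‖₊ : ℝ≥0∞) ^ 2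
      ≤ c⁻¹ * ∫⁻ z in C, (‖g (x + z) - g x‖₊ : ℝ≥0∞) ^ 2 := by
    intro x hx
    obtain ⟨m, hmM, hxA⟩ : ∃ m ∈ M, x ∈ A m := by
      have := hcover hx
      simpa using this
    obtain ⟨a, hAeq⟩ := hcube m hmM
    have hRvx : Rv x = (δ ^ d)⁻¹ * ∫ y in A m, g y := by
      rw [hRv m hmM x ⟨hxA, hx⟩]
      congr 1
      exact integral_congr_ae (ae_restrict_of_ae hvg)
    rw [hRvx, hAeq]
    exact aux_ptwise hδ hgm hg2 (hAeq ▸ hxA)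
  have hstep1 : (∫⁻ x in X, (‖Rv x - g x‖₊ : ℝ≥0∞) ^ 2)
      ≤ ∫⁻ x in X, c⁻¹ * ∫⁻ z in C, (‖g (x + z) - g x‖₊ : ℝ≥0∞) ^ 2 :=
    setLIntegral_mono (hGinner.const_mul _) key
  have hstep2 : (∫⁻ x in X, c⁻¹ * ∫⁻ z in C, (‖g (x + z) - g x‖₊ : ℝ≥0∞) ^ 2)
      = c⁻¹ * ∫⁻ z in C, ∫⁻ x in X, (‖g (x + z) - g x‖₊ : ℝ≥0∞) ^ 2 := by
    rw [lintegral_const_mul _ hGinner]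
    congr 1
    exact lintegral_lintegral_swap hGmeas_pair.aemeasurable
  have hJ : ∀ z ∈ C, (∫⁻ x in X, (‖g (x + z) - g x‖₊ : ℝ≥0∞) ^ 2) ≤ S ^ 2 := by
    intro z hz
    have he : eLpNorm (fun x => g (x + z) - g x) 2 (volume.restrict X)
        = eLpNorm (fun x => v (x + z) - v x) 2 (volume.restrict X) :=
      (eLpNorm_congr_ae (ae_restrict_of_ae (htrans z))).symm
    have heS : eLpNorm (fun x => v (x + z) - v x) 2 (volume.restrict X) ≤ S := by
      rw [hSdef]
      exact le_biSup (fun z => eLpNorm (fun x => v (x + z) - v x) 2 (volume.restrict X)) hz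
    have hEq : (∫⁻ x in X, (‖g (x + z) - g x‖₊ : ℝ≥0∞) ^ 2)
        = (eLpNorm (fun x => g (x + z) - g x) 2 (volume.restrict X)) ^ 2 := by
      rw [help]
      rw [← ENNReal.rpow_natCast ((∫⁻ x in X, (‖g (x + z) - g x‖₊ : ℝ≥0∞) ^ 2) ^ (1/(2:ℝ))) 2,
        ← ENNReal.rpow_mul]
      norm_num
    rw [hEq, he]
    exact pow_le_pow_left' heS 2
  have hCmeas : MeasurableSet C := by
    have : C = Metric.closedBall 0 δ := by
      ext z; simp [hCdef, Metric.mem_closedBall, dist_zero_right]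
    rw [this]; exact measurableSet_closedBall
  have hvolC : volume C = ENNReal.ofReal (2*δ) ^ d := by
    have : C = Set.univ.pi (fun _ => Set.Icc (-δ) δ) := by
      ext z
      simp only [hCdef, Set.mem_setOf_eq, pi_norm_le_iff_of_nonneg hδ.le, Set.mem_pi,
        Set.mem_univ, forall_true_left, Set.mem_Icc, Real.norm_eq_abs, abs_le]
    rw [this, volume_pi_pi]
    rw [Finset.prod_const, Real.volume_Icc]
    norm_num
    ring_nf
    rw [ENNReal.ofReal_mul hδ.le, mul_pow, ENNReal.ofReal_ofNat]
  have hstep3 : (∫⁻ z in C, ∫⁻ x in X, (‖g (x + z) - g x‖₊ : ℝ≥0∞) ^ 2)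
      ≤ S ^ 2 * ENNReal.ofReal (2*δ) ^ d := by
    calc (∫⁻ z in C, ∫⁻ x in X, (‖g (x + z) - g x‖₊ : ℝ≥0∞) ^ 2)
        ≤ ∫⁻ _ in C, S ^ 2 := setLIntegral_mono measurable_const hJ
      _ = S ^ 2 * ENNReal.ofReal (2*δ) ^ d := by
          rw [lintegral_const, Measure.restrict_apply_univ, hvolC]
  have hmain : (∫⁻ x in X, (‖Rv x - g x‖₊ : ℝ≥0∞) ^ 2) ≤ (2:ℝ≥0∞) ^ d * S ^ 2 := by
    refine le_trans (hstep1.trans (le_of_eq hstep2)) ?_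
    have h2 : ENNReal.ofReal (2*δ) ^ d = 2 ^ d * c := by
      rw [ENNReal.ofReal_mul (by norm_num), mul_pow, hcdef, ENNReal.ofReal_pow hδ.le]
      norm_num
    calc c⁻¹ * ∫⁻ z in C, ∫⁻ x in X, (‖g (x + z) - g x‖₊ : ℝ≥0∞) ^ 2
        ≤ c⁻¹ * (S ^ 2 * ENNReal.ofReal (2*δ) ^ d) := mul_le_mul_right hstep3 _
      _ = (2:ℝ≥0∞) ^ d * S ^ 2 * (c⁻¹ * c) := by rw [h2]; ring
      _ = (2:ℝ≥0∞) ^ d * S ^ 2 := by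
          rw [ENNReal.inv_mul_cancel hc0 ENNReal.ofReal_ne_top, mul_one]
  calc (∫⁻ x in X, (‖Rv x - g x‖₊ : ℝ≥0∞) ^ 2) ^ (1/(2:ℝ))
      ≤ ((2:ℝ≥0∞) ^ d * S ^ 2) ^ (1/(2:ℝ)) :=
        ENNReal.rpow_le_rpow hmain (by norm_num)
    _ = (2:ℝ≥0∞) ^ ((d:ℝ)/2) * S := by
        rw [ENNReal.mul_rpow_of_nonneg _ _ (by norm_num : (0:ℝ) ≤ 1/2), aux_half',
          ← ENNReal.rpow_natCast 2 d, ← ENNReal.rpow_mul]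
        norm_num
        rw [mul_one_div]
end

section
/- Let S : ℝ → ℝ be non-decreasing and continuous, let Q be a finite measure space, and let (p_k) be a sequence in L²(Q) converging weakly in L²(Q) to p, such that (S(p_k)) converges strongly in L²(Q) to some s ∈ L²(Q). Then s = S(p) almost everywhere. -/
open MeasureTheory Filter Topology

section Aux

variable {Q : Type*} [MeasurableSpace Q] {μ : Measure Q}

lemma aux_integrable_mul {f g : Q → ℝ} (hf : MemLp f 2 μ) (hg : MemLp g 2 μ) :
    Integrable (fun x => f x * g x) μ := by
  rw [← memLp_one_iff_integrable]
  have : (1 : ENNReal) / 1 = 1 / 2 + 1 / 2 := by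
    rw [ENNReal.div_add_div_same, one_add_one_eq_two,
      ENNReal.div_self two_ne_zero ENNReal.ofNat_ne_top, div_one]
  exact hg.smul (φ := f) (r := 1) hf

lemma aux_cs_s13 {f g : Q → ℝ} (hf : MemLp f 2 μ) (hg : MemLp g 2 μ) :
    |∫ x, f x * g x ∂μ| ≤ (eLpNorm f 2 μ).toReal * (eLpNorm g 2 μ).toReal := by
  have h1 : ∫ x, f x * g x ∂μ = inner (𝕜 := ℝ) (hf.toLp f) (hg.toLp g) := by
    rw [L2.inner_def]
    refine integral_congr_ae ?_
    filter_upwards [hf.coeFn_toLp, hg.coeFn_toLp] with x h h'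
    simp [h, h', RCLike.inner_apply, mul_comm]
  rw [h1, ← Lp.norm_toLp f hf, ← Lp.norm_toLp g hg]
  exact abs_real_inner_le_norm _ _

end Aux

theorem stmt_13 {Q : Type*} [MeasurableSpace Q] (μ : Measure Q) [IsFiniteMeasure μ]
    (S : ℝ → ℝ) (hmono : Monotone S) (hcont : Continuous S)
    (hSbd : ∀ z, S z ∈ Set.Icc (0:ℝ) 1)
    (pk : ℕ → Q → ℝ) (p : Q → ℝ) (s : Q → ℝ)
    (hpk : ∀ k, MemLp (pk k) 2 μ) (hp : MemLp p 2 μ) (hs : MemLp s 2 μ)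
    (hweak : ∀ φ : Q → ℝ, MemLp φ 2 μ →
      Tendsto (fun k => ∫ x, pk k x * φ x ∂μ) atTop (𝓝 (∫ x, p x * φ x ∂μ)))
    (hstrong : Tendsto (fun k => eLpNorm (fun x => S (pk k x) - s x) 2 μ)
      atTop (𝓝 0)) :
    s =ᵐ[μ] fun x => S (p x) := by
  -- S of any a.e.-strongly-measurable function is in L²
  have hSabs : ∀ z : ℝ, |S z| ≤ 1 := by
    intro z
    have := hSbd z
    rw [abs_le]
    exact ⟨by linarith [this.1], this.2⟩
  have hSmem : ∀ f : Q → ℝ, AEStronglyMeasurable f μ → MemLp (fun x => S (f x)) 2 μ := by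
    intro f hf
    exact MemLp.of_bound (hcont.comp_aestronglyMeasurable hf) 1
      (ae_of_all _ fun x => by rw [Real.norm_eq_abs]; exact hSabs (f x))
  -- real-valued strong convergence
  have hstrong' : Tendsto
      (fun k => (eLpNorm (fun x => S (pk k x) - s x) 2 μ).toReal) atTop (𝓝 0) := by
    have := (ENNReal.tendsto_toReal (a := 0) (by simp)).comp hstrong
    simpa [Function.comp_def] using this
  -- Step 1: uniform bound on ‖pk k‖₂ via Banach–Steinhaus
  obtain ⟨C, hC0, hC⟩ : ∃ C : ℝ, 0 ≤ C ∧ ∀ k, (eLpNorm (pk k) 2 μ).toReal ≤ C := by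
    set Pk : ℕ → Lp ℝ 2 μ := fun k => (hpk k).toLp (pk k) with hPk
    have hpt : ∀ φ : Lp ℝ 2 μ, ∃ C : ℝ, ∀ k, ‖(innerSL ℝ (Pk k)) φ‖ ≤ C := by
      intro φ
      have hconv : Tendsto (fun k => (innerSL ℝ (Pk k)) φ) atTop
          (𝓝 (∫ x, p x * (φ : Q → ℝ) x ∂μ)) := by
        have hmem : MemLp (φ : Q → ℝ) 2 μ := Lp.memLp φ
        have heq : ∀ k, (innerSL ℝ (Pk k)) φ = ∫ x, pk k x * (φ : Q → ℝ) x ∂μ := by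
          intro k
          show inner (𝕜 := ℝ) (Pk k) φ = _
          rw [L2.inner_def]
          refine integral_congr_ae ?_
          filter_upwards [(hpk k).coeFn_toLp] with x h
          simp [hPk, h, RCLike.inner_apply, mul_comm]
        simp_rw [heq]
        exact hweak _ hmem
      have hb : BddAbove (Set.range fun k => ‖(innerSL ℝ (Pk k)) φ‖) :=
        hconv.norm.bddAbove_range
      obtain ⟨C, hCb⟩ := hb
      exact ⟨C, fun k => hCb (Set.mem_range_self k)⟩
    obtain ⟨C', hC'⟩ := banach_steinhaus hpt
    refine ⟨max C' 0, le_max_right _ _, fun k => ?_⟩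
    have h1 : ‖Pk k‖ ≤ C' := by
      have := hC' k
      rwa [innerSL_apply_norm] at this
    have h2 : ‖Pk k‖ = (eLpNorm (pk k) 2 μ).toReal := Lp.norm_toLp _ _
    rw [← h2]
    exact h1.trans (le_max_left _ _)
  -- Step 2: Minty inequality
  have minty : ∀ φ : Q → ℝ, MemLp φ 2 μ →
      0 ≤ ∫ x, (s x - S (φ x)) * (p x - φ x) ∂μ := by
    intro φ hφ
    have hSφ : MemLp (fun x => S (φ x)) 2 μ := hSmem φ hφ.1
    have hSpk : ∀ k, MemLp (fun x => S (pk k x)) 2 μ := fun k => hSmem _ (hpk k).1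
    have hdiff : ∀ k, MemLp (fun x => S (pk k x) - s x) 2 μ := fun k => (hSpk k).sub hs
    -- integrabilities
    have i1 : ∀ k, Integrable (fun x => S (pk k x) * pk k x) μ :=
      fun k => aux_integrable_mul (hSpk k) (hpk k)
    have i2 : ∀ k, Integrable (fun x => S (pk k x) * φ x) μ :=
      fun k => aux_integrable_mul (hSpk k) hφ
    have i3 : ∀ k, Integrable (fun x => S (φ x) * pk k x) μ :=
      fun k => aux_integrable_mul hSφ (hpk k)
    have i4 : Integrable (fun x => S (φ x) * φ x) μ := aux_integrable_mul hSφ hφ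
    have j1 : Integrable (fun x => s x * p x) μ := aux_integrable_mul hs hp
    have j2 : Integrable (fun x => s x * φ x) μ := aux_integrable_mul hs hφ
    have j3 : Integrable (fun x => S (φ x) * p x) μ := aux_integrable_mul hSφ hp
    -- expansion
    have expand : ∀ k, ∫ x, (S (pk k x) - S (φ x)) * (pk k x - φ x) ∂μ
        = ((∫ x, S (pk k x) * pk k x ∂μ) - (∫ x, S (pk k x) * φ x ∂μ)
          - (∫ x, S (φ x) * pk k x ∂μ)) + ∫ x, S (φ x) * φ x ∂μ := by
      intro k
      have hfe : (fun x => (S (pk k x) - S (φ x)) * (pk k x - φ x))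
          = fun x => (S (pk k x) * pk k x - S (pk k x) * φ x - S (φ x) * pk k x)
            + S (φ x) * φ x := by
        funext x; ring
      have e1 : Integrable (fun x => S (pk k x) * pk k x - S (pk k x) * φ x) μ :=
        (i1 k).sub (i2 k)
      have e2 : Integrable
          (fun x => S (pk k x) * pk k x - S (pk k x) * φ x - S (φ x) * pk k x) μ :=
        e1.sub (i3 k)
      rw [hfe, integral_add e2 i4, integral_sub e1 (i3 k), integral_sub (i1 k) (i2 k)]
    have expand' : ∫ x, (s x - S (φ x)) * (p x - φ x) ∂μ
        = ((∫ x, s x * p x ∂μ) - (∫ x, s x * φ x ∂μ)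
          - (∫ x, S (φ x) * p x ∂μ)) + ∫ x, S (φ x) * φ x ∂μ := by
      have hfe : (fun x => (s x - S (φ x)) * (p x - φ x))
          = fun x => (s x * p x - s x * φ x - S (φ x) * p x) + S (φ x) * φ x := by
        funext x; ring
      have e1 : Integrable (fun x => s x * p x - s x * φ x) μ := j1.sub j2
      have e2 : Integrable (fun x => s x * p x - s x * φ x - S (φ x) * p x) μ :=
        e1.sub j3
      rw [hfe, integral_add e2 i4, integral_sub e1 j3, integral_sub j1 j2]
    -- limits of the pieces
    -- generic: ∫ (S(pk k) - s) * g → 0 for fixed g ∈ L²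
    have hzero : ∀ g : Q → ℝ, MemLp g 2 μ →
        Tendsto (fun k => ∫ x, (S (pk k x) - s x) * g x ∂μ) atTop (𝓝 0) := by
      intro g hg
      apply squeeze_zero_norm
        (a := fun k => (eLpNorm (fun x => S (pk k x) - s x) 2 μ).toReal
          * (eLpNorm g 2 μ).toReal)
      · intro k
        exact aux_cs_s13 (hdiff k) hg
      · simpa using hstrong'.mul_const ((eLpNorm g 2 μ).toReal)
    have limA : Tendsto (fun k => ∫ x, S (pk k x) * pk k x ∂μ) atTop
        (𝓝 (∫ x, s x * p x ∂μ)) := by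
      have hsplit : ∀ k, ∫ x, S (pk k x) * pk k x ∂μ
          = (∫ x, (S (pk k x) - s x) * pk k x ∂μ) + ∫ x, s x * pk k x ∂μ := by
        intro k
        rw [← integral_add (aux_integrable_mul (hdiff k) (hpk k))
          (aux_integrable_mul hs (hpk k))]
        congr 1; funext x; ring
      simp_rw [hsplit]
      -- first part → 0 by squeeze with uniform bound C
      have d1 : Tendsto (fun k => ∫ x, (S (pk k x) - s x) * pk k x ∂μ) atTop (𝓝 0) := by
        apply squeeze_zero_norm
          (a := fun k => (eLpNorm (fun x => S (pk k x) - s x) 2 μ).toReal * C)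
        · intro k
          refine (aux_cs_s13 (hdiff k) (hpk k)).trans ?_
          exact mul_le_mul_of_nonneg_left (hC k) ENNReal.toReal_nonneg
        · simpa using hstrong'.mul_const C
      have d2 : Tendsto (fun k => ∫ x, s x * pk k x ∂μ) atTop
          (𝓝 (∫ x, s x * p x ∂μ)) := by
        have := hweak s hs
        simp_rw [mul_comm] at this ⊢
        exact this
      simpa using d1.add d2
    have limB : Tendsto (fun k => ∫ x, S (pk k x) * φ x ∂μ) atTop
        (𝓝 (∫ x, s x * φ x ∂μ)) := by
      have hsplit : ∀ k, ∫ x, S (pk k x) * φ x ∂μ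
          = (∫ x, (S (pk k x) - s x) * φ x ∂μ) + ∫ x, s x * φ x ∂μ := by
        intro k
        rw [← integral_add (aux_integrable_mul (hdiff k) hφ) j2]
        congr 1; funext x; ring
      simp_rw [hsplit]
      simpa using (hzero φ hφ).add (tendsto_const_nhds (x := ∫ x, s x * φ x ∂μ))
    have limC : Tendsto (fun k => ∫ x, S (φ x) * pk k x ∂μ) atTop
        (𝓝 (∫ x, S (φ x) * p x ∂μ)) := by
      have := hweak (fun x => S (φ x)) hSφ
      simp_rw [mul_comm] at this ⊢
      exact this
    have limkey : Tendsto (fun k => ∫ x, (S (pk k x) - S (φ x)) * (pk k x - φ x) ∂μ)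
        atTop (𝓝 (∫ x, (s x - S (φ x)) * (p x - φ x) ∂μ)) := by
      simp_rw [expand, expand']
      exact ((limA.sub limB).sub limC).add tendsto_const_nhds
    refine ge_of_tendsto limkey (Eventually.of_forall fun k => ?_)
    refine integral_nonneg fun x => ?_
    rcases le_total (φ x) (pk k x) with h | h
    · exact mul_nonneg (sub_nonneg.2 (hmono h)) (sub_nonneg.2 h)
    · exact mul_nonneg_of_nonpos_of_nonpos (sub_nonpos.2 (hmono h)) (sub_nonpos.2 h)
  -- Step 3: for every ψ ∈ L², ∫ (s - S p) ψ ≥ 0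
  have step3 : ∀ ψ : Q → ℝ, MemLp ψ 2 μ →
      0 ≤ ∫ x, (s x - S (p x)) * ψ x ∂μ := by
    intro ψ hψ
    set t : ℕ → ℝ := fun n => 1 / (n + 1) with ht
    have htpos : ∀ n, 0 < t n := fun n => by positivity
    have hφmem : ∀ n, MemLp (fun x => p x - t n * ψ x) 2 μ :=
      fun n => hp.sub (hψ.const_mul (t n))
    have hstep : ∀ n : ℕ, 0 ≤ ∫ x, (s x - S (p x - t n * ψ x)) * ψ x ∂μ := by
      intro n
      have h0 := minty (fun x => p x - t n * ψ x) (hφmem n)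
      have heq : (fun x => (s x - S (p x - t n * ψ x)) * (p x - (p x - t n * ψ x)))
          = fun x => t n * ((s x - S (p x - t n * ψ x)) * ψ x) := by
        funext x; ring
      rw [heq, integral_const_mul] at h0
      by_contra hI; push_neg at hI; nlinarith [htpos n]
    -- pass to the limit n → ∞ by dominated convergence
    have hψm : AEStronglyMeasurable ψ μ := hψ.1
    have hpm : AEStronglyMeasurable p μ := hp.1
    have hsm : AEStronglyMeasurable s μ := hs.1
    have hbd : Integrable (fun x => (‖s x‖ + 1) * ‖ψ x‖) μ :=
      aux_integrable_mul (hs.norm.add (memLp_const 1)) hψ.norm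
    have htlim : Tendsto t atTop (𝓝 0) := tendsto_one_div_add_atTop_nhds_zero_nat
    have hlim : Tendsto (fun n => ∫ x, (s x - S (p x - t n * ψ x)) * ψ x ∂μ) atTop
        (𝓝 (∫ x, (s x - S (p x)) * ψ x ∂μ)) := by
      refine tendsto_integral_of_dominated_convergence
        (fun x => (‖s x‖ + 1) * ‖ψ x‖) (fun n => ?_) hbd (fun n => ?_) ?_
      · exact (hsm.sub (hcont.comp_aestronglyMeasurable
          (hpm.sub (hψm.const_mul (t n))))).mul hψm
      · refine ae_of_all _ fun x => ?_
        rw [norm_mul]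
        refine mul_le_mul_of_nonneg_right ?_ (norm_nonneg _)
        calc ‖s x - S (p x - t n * ψ x)‖ ≤ ‖s x‖ + ‖S (p x - t n * ψ x)‖ :=
              norm_sub_le _ _
          _ ≤ ‖s x‖ + 1 := by
              have := hSabs (p x - t n * ψ x)
              simp only [Real.norm_eq_abs]
              linarith
      · refine ae_of_all _ fun x => ?_
        have h1 : Tendsto (fun n => p x - t n * ψ x) atTop (𝓝 (p x)) := by
          have h3 := tendsto_const_nhds (x := p x) (f := atTop (α := ℕ)) |>.sub
            (htlim.mul_const (ψ x))
          simpa only [zero_mul, sub_zero] using h3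
        exact ((tendsto_const_nhds.sub ((hcont.tendsto _).comp h1)).mul
          tendsto_const_nhds)
    exact ge_of_tendsto hlim (Eventually.of_forall hstep)
  -- Step 4: conclude
  have hψ0 : MemLp (fun x => s x - S (p x)) 2 μ := hs.sub (hSmem p hp.1)
  have h1 := step3 _ hψ0
  have h2 := step3 (fun x => -(s x - S (p x))) hψ0.neg
  simp_rw [mul_neg, integral_neg] at h2
  have hz : ∫ x, (s x - S (p x)) * (s x - S (p x)) ∂μ = 0 := le_antisymm (by linarith) h1
  have hint : Integrable (fun x => (s x - S (p x)) * (s x - S (p x))) μ :=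
    aux_integrable_mul hψ0 hψ0
  rw [integral_eq_zero_iff_of_nonneg (fun x => mul_self_nonneg _) hint] at hz
  filter_upwards [hz] with x hx
  have : (s x - S (p x)) * (s x - S (p x)) = 0 := hx
  have := mul_self_eq_zero.mp this
  linarith [sub_eq_zero.mp this]
end
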